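/- For distinct nonzero real numbers k, h with k² ≠ h² and nonzero complex constants c, d, the function u(x,t) = c d (k² − h²)/( k h [ c d̄ k e^{−i(h²x + t/h²)} + c̄ d h e^{−i(k²x + t/k²)} ] ) satisfies the Fokas-Lenells equation u_{xt} + u − 2i|u|²u_x = 0 wherever defined; moreover if |k| ≠ |h| the denominator never vanishes, so u is a globally smooth solution. -/

import Mathlib

open Complex

noncomputable def dX (f : ℝ → ℝ → ℂ) (x t : ℝ) : ℂ := deriv (fun x' => f x' t) x
noncomputable def dT (f : ℝ → ℝ → ℂ) (x t : ℝ) : ℂ := deriv (fun t' => f x t') t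

/-- The real-eigenvalue one-soliton solution of the Fokas-Lenells equation. -/
noncomputable def realSoliton (k h : ℝ) (c d : ℂ) (x t : ℝ) : ℂ :=
  c * d * ((k : ℂ) ^ 2 - (h : ℂ) ^ 2) /
    ((k : ℂ) * (h : ℂ) *
      (c * starRingEnd ℂ d * (k : ℂ) *
          Complex.exp (-I * ((h : ℂ) ^ 2 * (x : ℂ) + (t : ℂ) / (h : ℂ) ^ 2))
        + starRingEnd ℂ c * d * (h : ℂ) *
          Complex.exp (-I * ((k : ℂ) ^ 2 * (x : ℂ) + (t : ℂ) / (k : ℂ) ^ 2))))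


lemma hexp (a b : ℂ) (x : ℝ) :
    HasDerivAt (fun s : ℝ => Complex.exp (-I*(a*s+b))) (-I*a * Complex.exp (-I*(a*x+b))) x := by
  have h1 : HasDerivAt (fun z : ℂ => Complex.exp (-I*(a*z+b)))
      (-I*a * Complex.exp (-I*(a*(x:ℂ)+b))) (x:ℂ) := by
    have h2 := ((((hasDerivAt_id ((x:ℂ))).const_mul a).add_const b).const_mul (-I)).cexp
    simp only [id] at h2
    exact h2.congr_deriv (by ring)
  exact h1.comp_ofReal

lemma hexp' (a b : ℂ) (x : ℝ) :
    HasDerivAt (fun s : ℝ => Complex.exp (-I*(b + s/a))) (-I/a * Complex.exp (-I*(b + x/a))) x := by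
  have h1 := hexp a⁻¹ b x
  have he : (fun s : ℝ => Complex.exp (-I*(a⁻¹*s+b))) = fun s : ℝ => Complex.exp (-I*(b + s/a)) := by
    funext s; rw [div_eq_inv_mul]; ring_nf
  rw [he] at h1
  have hv : -I/a * Complex.exp (-I*(b + (x:ℂ)/a)) = -I*a⁻¹ * Complex.exp (-I*(a⁻¹*(x:ℂ)+b)) := by
    rw [div_eq_mul_inv, div_eq_inv_mul]; ring_nf
  rw [hv]; exact h1

noncomputable def Eh (h : ℝ) (x t : ℝ) : ℂ :=
  Complex.exp (-I * ((h:ℂ)^2 * (x:ℂ) + (t:ℂ) / (h:ℂ)^2))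

noncomputable def Dd (k h : ℝ) (c d : ℂ) (x t : ℝ) : ℂ :=
  (k:ℂ) * (h:ℂ) * (c * starRingEnd ℂ d * (k:ℂ) * Eh h x t + starRingEnd ℂ c * d * (h:ℂ) * Eh k x t)

noncomputable def DXf (k h : ℝ) (c d : ℂ) (x t : ℝ) : ℂ :=
  (k:ℂ) * (h:ℂ) * (c * starRingEnd ℂ d * (k:ℂ) * (-I*(h:ℂ)^2) * Eh h x t
    + starRingEnd ℂ c * d * (h:ℂ) * (-I*(k:ℂ)^2) * Eh k x t)

noncomputable def DTf (k h : ℝ) (c d : ℂ) (x t : ℝ) : ℂ :=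
  (k:ℂ) * (h:ℂ) * (c * starRingEnd ℂ d * (k:ℂ) * (-I/(h:ℂ)^2) * Eh h x t
    + starRingEnd ℂ c * d * (h:ℂ) * (-I/(k:ℂ)^2) * Eh k x t)

lemma hEh_x (h : ℝ) (x t : ℝ) :
    HasDerivAt (fun x' => Eh h x' t) (-I*(h:ℂ)^2 * Eh h x t) x := hexp _ _ x

lemma hEh_t (h : ℝ) (x t : ℝ) :
    HasDerivAt (fun t' => Eh h x t') (-I/(h:ℂ)^2 * Eh h x t) t := hexp' _ _ t

lemma hD_x (k h : ℝ) (c d : ℂ) (x t : ℝ) :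
    HasDerivAt (fun x' => Dd k h c d x' t) (DXf k h c d x t) x := by
  unfold Dd DXf
  have := (((hEh_x h x t).const_mul (c * starRingEnd ℂ d * (k:ℂ))).add
    ((hEh_x k x t).const_mul (starRingEnd ℂ c * d * (h:ℂ)))).const_mul ((k:ℂ)*(h:ℂ))
  exact this.congr_deriv (by ring)

lemma hD_t (k h : ℝ) (c d : ℂ) (x t : ℝ) :
    HasDerivAt (fun t' => Dd k h c d x t') (DTf k h c d x t) t := by
  unfold Dd DTf
  have := (((hEh_t h x t).const_mul (c * starRingEnd ℂ d * (k:ℂ))).add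
    ((hEh_t k x t).const_mul (starRingEnd ℂ c * d * (h:ℂ)))).const_mul ((k:ℂ)*(h:ℂ))
  exact this.congr_deriv (by ring)

lemma hDX_t (k h : ℝ) (c d : ℂ) (x t : ℝ) (hk : (k:ℂ) ≠ 0) (hh : (h:ℂ) ≠ 0) :
    HasDerivAt (fun t' => DXf k h c d x t') (-(Dd k h c d x t)) t := by
  unfold DXf Dd
  have := (((hEh_t h x t).const_mul (c * starRingEnd ℂ d * (k:ℂ) * (-I*(h:ℂ)^2))).add
    ((hEh_t k x t).const_mul (starRingEnd ℂ c * d * (h:ℂ) * (-I*(k:ℂ)^2)))).const_mul ((k:ℂ)*(h:ℂ))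
  refine this.congr_deriv ?_
  field_simp
  ring_nf
  rw [Complex.I_sq]
  ring

lemma soliton_eq (k h : ℝ) (c d : ℂ) (x t : ℝ) :
    realSoliton k h c d x t = c * d * ((k:ℂ)^2 - (h:ℂ)^2) / Dd k h c d x t := rfl

lemma dX_eq (k h : ℝ) (c d : ℂ) (x t : ℝ) (hD : Dd k h c d x t ≠ 0) :
    dX (realSoliton k h c d) x t
      = -(c * d * ((k:ℂ)^2 - (h:ℂ)^2)) * DXf k h c d x t / (Dd k h c d x t)^2 := by
  have h1 : HasDerivAt (fun x' => realSoliton k h c d x' t)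
      ((0 * Dd k h c d x t - c * d * ((k:ℂ)^2 - (h:ℂ)^2) * DXf k h c d x t)
        / (Dd k h c d x t)^2) x := by
    have := (hasDerivAt_const x (c * d * ((k:ℂ)^2 - (h:ℂ)^2))).div (hD_x k h c d x t) hD
    exact this
  have h2 := h1.deriv
  rw [dX, h2]; ring

lemma contD (k h : ℝ) (c d : ℂ) (x : ℝ) : Continuous (fun t' => Dd k h c d x t') := by
  unfold Dd Eh
  fun_prop

lemma dTdX_eq (k h : ℝ) (c d : ℂ) (x t : ℝ) (hk : (k:ℂ) ≠ 0) (hh : (h:ℂ) ≠ 0)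
    (hD : Dd k h c d x t ≠ 0) :
    dT (dX (realSoliton k h c d)) x t
      = (c * d * ((k:ℂ)^2 - (h:ℂ)^2) * Dd k h c d x t * (Dd k h c d x t)^2
          - (-(c * d * ((k:ℂ)^2 - (h:ℂ)^2)) * DXf k h c d x t)
              * (2 * Dd k h c d x t * DTf k h c d x t))
        / ((Dd k h c d x t)^2)^2 := by
  have hev : ∀ᶠ t' in nhds t, Dd k h c d x t' ≠ 0 :=
    (contD k h c d x).continuousAt.eventually_ne hD
  have heq : (fun t' => dX (realSoliton k h c d) x t')
      =ᶠ[nhds t] fun t' => -(c * d * ((k:ℂ)^2 - (h:ℂ)^2)) * DXf k h c d x t' / (Dd k h c d x t')^2 :=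
    hev.mono fun t' h' => dX_eq k h c d x t' h'
  rw [dT, heq.deriv_eq]
  have hf : HasDerivAt (fun t' => -(c * d * ((k:ℂ)^2 - (h:ℂ)^2)) * DXf k h c d x t')
      (-(c * d * ((k:ℂ)^2 - (h:ℂ)^2)) * -(Dd k h c d x t)) t :=
    (hDX_t k h c d x t hk hh).const_mul _
  have hg : HasDerivAt (fun t' => (Dd k h c d x t')^2)
      (2 * Dd k h c d x t * DTf k h c d x t) t := by
    have h2 := (hD_t k h c d x t).mul (hD_t k h c d x t)
    simp only [pow_two]
    exact h2.congr_deriv (by ring)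
  have hdiv := hf.div hg (pow_ne_zero 2 hD)
  rw [HasDerivAt.deriv (f := fun t' => -(c * d * ((k:ℂ)^2 - (h:ℂ)^2)) * DXf k h c d x t' / (Dd k h c d x t')^2) hdiv]
  congr 1
  push_cast
  ring

lemma conj_Eh (h : ℝ) (x t : ℝ) : starRingEnd ℂ (Eh h x t) = (Eh h x t)⁻¹ := by
  unfold Eh
  rw [← Complex.exp_conj, ← Complex.exp_neg]
  congr 1
  simp only [map_mul, map_add, map_div₀, map_pow, Complex.conj_ofReal, map_neg, Complex.conj_I]
  ring

set_option maxHeartbeats 2000000 in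
lemma main_eq (k h : ℝ) (hk : k ≠ 0) (hh : h ≠ 0) (c d : ℂ) (x t : ℝ)
    (hD : Dd k h c d x t ≠ 0) :
    dT (dX (realSoliton k h c d)) x t + realSoliton k h c d x t
      - 2 * I * (realSoliton k h c d x t * starRingEnd ℂ (realSoliton k h c d x t))
        * dX (realSoliton k h c d) x t = 0 := by
  have hk' : (k:ℂ) ≠ 0 := Complex.ofReal_ne_zero.mpr hk
  have hh' : (h:ℂ) ≠ 0 := Complex.ofReal_ne_zero.mpr hh
  have he1 : Eh h x t ≠ 0 := Complex.exp_ne_zero _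
  have he2 : Eh k x t ≠ 0 := Complex.exp_ne_zero _
  rw [dTdX_eq k h c d x t hk' hh' hD, dX_eq k h c d x t hD, soliton_eq]
  have hc1 := conj_Eh h x t
  have hc2 := conj_Eh k x t
  have hD' := hD
  unfold Dd DXf DTf at *
  set e1 := Eh h x t with he1'
  set e2 := Eh k x t with he2'
  set S := c * starRingEnd ℂ d * (k:ℂ) * e1 + starRingEnd ℂ c * d * (h:ℂ) * e2 with hSdef
  have hS : S ≠ 0 := by
    intro h0
    apply hD'
    rw [h0, mul_zero]
  set T := starRingEnd ℂ c * d * (k:ℂ) * e2 + c * starRingEnd ℂ d * (h:ℂ) * e1 with hTdef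
  have key : starRingEnd ℂ S = T / (e1 * e2) := by
    rw [hSdef, hTdef]
    simp only [map_add, map_mul, Complex.conj_ofReal, Complex.conj_conj, hc1, hc2]
    field_simp
  have hT : T ≠ 0 := by
    intro h0
    apply hS
    have h1 : starRingEnd ℂ S = 0 := by rw [key, h0, zero_div]
    have := congrArg (starRingEnd ℂ) h1
    simpa using this
  clear_value e1 e2 S T
  simp only [map_div₀, map_mul, map_sub, map_pow, Complex.conj_ofReal, key]
  field_simp [hS, hT]
  rw [mul_zero]
  rw [hSdef, hTdef]
  ring_nf
  simp only [Complex.I_sq]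
  ring

lemma abs_Eh (h : ℝ) (x t : ℝ) : ‖Eh h x t‖ = 1 := by
  unfold Eh
  rw [Complex.norm_exp]
  have : (-I * ((h:ℂ)^2 * (x:ℂ) + (t:ℂ) / (h:ℂ)^2)).re = 0 := by
    simp [Complex.div_im, ← Complex.ofReal_pow]
  rw [this, Real.exp_zero]

lemma nonvanish (k h : ℝ) (hk : k ≠ 0) (hh : h ≠ 0) (c d : ℂ) (hc : c ≠ 0) (hd : d ≠ 0)
    (hkh : |k| ≠ |h|) (x t : ℝ) : Dd k h c d x t ≠ 0 := by
  unfold Dd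
  have hk' : (k:ℂ) ≠ 0 := Complex.ofReal_ne_zero.mpr hk
  have hh' : (h:ℂ) ≠ 0 := Complex.ofReal_ne_zero.mpr hh
  apply mul_ne_zero (mul_ne_zero hk' hh')
  intro h0
  have h1 : c * starRingEnd ℂ d * (k:ℂ) * Eh h x t = -(starRingEnd ℂ c * d * (h:ℂ) * Eh k x t) :=
    eq_neg_of_add_eq_zero_left h0
  have h2 := congrArg norm h1
  simp only [norm_mul, norm_neg, Complex.norm_conj, Complex.norm_real, Real.norm_eq_abs,
    abs_Eh, mul_one] at h2
  apply hkh
  have hc' : ‖c‖ ≠ 0 := by simpa using hc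
  have hd' : ‖d‖ ≠ 0 := by simpa using hd
  field_simp at h2
  exact h2

theorem realSoliton_solves_FL (k h : ℝ) (hk : k ≠ 0) (hh : h ≠ 0) (hkh : k ^ 2 ≠ h ^ 2)
    (c d : ℂ) (hc : c ≠ 0) (hd : d ≠ 0) :
    (∀ x t : ℝ,
      ((k : ℂ) * (h : ℂ) *
        (c * starRingEnd ℂ d * (k : ℂ) *
            Complex.exp (-I * ((h : ℂ) ^ 2 * (x : ℂ) + (t : ℂ) / (h : ℂ) ^ 2))
          + starRingEnd ℂ c * d * (h : ℂ) *
            Complex.exp (-I * ((k : ℂ) ^ 2 * (x : ℂ) + (t : ℂ) / (k : ℂ) ^ 2))) ≠ 0) →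
      dT (dX (realSoliton k h c d)) x t + realSoliton k h c d x t
        - 2 * I * (realSoliton k h c d x t * starRingEnd ℂ (realSoliton k h c d x t))
          * dX (realSoliton k h c d) x t = 0) ∧
    (|k| ≠ |h| →
      ∀ x t : ℝ,
        ((k : ℂ) * (h : ℂ) *
          (c * starRingEnd ℂ d * (k : ℂ) *
              Complex.exp (-I * ((h : ℂ) ^ 2 * (x : ℂ) + (t : ℂ) / (h : ℂ) ^ 2))
            + starRingEnd ℂ c * d * (h : ℂ) *
              Complex.exp (-I * ((k : ℂ) ^ 2 * (x : ℂ) + (t : ℂ) / (k : ℂ) ^ 2))) ≠ 0)) := by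
  refine ⟨fun x t hDne => main_eq k h hk hh c d x t hDne,
    fun habs x t => nonvanish k h hk hh c d hc hd habs x t⟩
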